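/- Let K = ℚ₂(√−1) with ring of integers O and uniformizer π = 1 + √−1. Then the quadratic defect of the unit u = 3 + 2√−1 equals (π)³. -/

import Mathlib

open Polynomial

private lemma QD.pow_dvd_iff (n : ℕ) (x : ℤ_[2]) :
    (2:ℤ_[2])^n ∣ x ↔ PadicInt.toZModPow n x = 0 := by
  rw [← Ideal.mem_span_singleton]
  have := PadicInt.ker_toZModPow (p := 2) n
  rw [← RingHom.mem_ker, this]
  norm_num

private lemma QD.cast21 (x : ℤ_[2]) :
    (ZMod.cast (PadicInt.toZModPow 2 x) : ZMod (2^1)) = PadicInt.toZModPow 1 x := by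
  rw [PadicInt.cast_toZModPow 1 2 (by norm_num)]

private lemma QD.isUnit_of_odd (x : ℤ_[2]) (h : PadicInt.toZModPow 1 x ≠ 0) : IsUnit x := by
  rw [PadicInt.isUnit_iff]
  rcases lt_or_eq_of_le (PadicInt.norm_le_one x) with h1 | h1
  · exfalso
    apply h
    rw [← QD.pow_dvd_iff, pow_one]
    exact_mod_cast (PadicInt.norm_lt_one_iff_dvd x).mp h1
  · exact h1

private lemma QD.inv_of_odd (x : ℤ_[2]) (h : PadicInt.toZModPow 1 x ≠ 0) :
    ∃ m, x * m = 1 := by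
  obtain ⟨u, hu⟩ := QD.isUnit_of_odd x h
  exact ⟨↑u⁻¹, by rw [← hu]; exact u.mul_inv⟩

private lemma QD.key_arith (a b : ℤ_[2]) : ∃ s t : ℤ_[2],
    (3 - a^2 + b^2) * s - (2 - 2*a*b) * t = -2 ∧
    (3 - a^2 + b^2) * t + (2 - 2*a*b) * s = 2 := by
  set φ₁ := PadicInt.toZModPow (p := 2) 1 with hφ₁
  set φ₂ := PadicInt.toZModPow (p := 2) 2 with hφ₂
  by_cases hab : φ₁ a = φ₁ b
  · have hN : φ₁ ((3 - a^2 + b^2)^2 + (2 - 2*a*b)^2) ≠ 0 := by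
      simp only [map_add, map_sub, map_mul, map_pow, map_ofNat, hab]
      exact (by decide : ∀ β : ZMod (2^1), (3 - β^2 + β^2)^2 + (2 - 2*β*β)^2 ≠ 0) _
    obtain ⟨m, hm⟩ := QD.inv_of_odd _ hN
    refine ⟨(2*(2-2*a*b) - 2*(3-a^2+b^2))*m, (2*(3-a^2+b^2) + 2*(2-2*a*b))*m, ?_, ?_⟩
    · linear_combination (-2) * hm
    · linear_combination 2 * hm
  · by_cases ha : φ₁ a = 0
    · have hb : φ₁ b ≠ 0 := fun h => hab (ha.trans h.symm)
      have hcast_a : (ZMod.cast (φ₂ a) : ZMod (2^1)) = 0 := by rw [hφ₂, QD.cast21, ← hφ₁, ha]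
      have hcast_b : (ZMod.cast (φ₂ b) : ZMod (2^1)) ≠ 0 := by
        rw [hφ₂, QD.cast21, ← hφ₁]; exact hb
      have hmod : φ₂ (3 - a^2 + b^2) = 0 ∧ φ₂ (2 - 2*a*b) = 2 := by
        simp only [map_add, map_sub, map_mul, map_pow, map_ofNat]
        exact (by decide : ∀ α β : ZMod (2^2), (ZMod.cast α : ZMod (2^1)) = 0 →
          (ZMod.cast β : ZMod (2^1)) ≠ 0 → (3 - α^2 + β^2 = 0 ∧ 2 - 2*α*β = 2)) _ _ hcast_a hcast_b
      obtain ⟨t₀, hc⟩ := (QD.pow_dvd_iff 2 _).mpr hmod.1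
      have hc : 3 - a^2 + b^2 = 4*t₀ := by rw [hc]; ring
      have hd2 : φ₁ (2 - 2*a*b) = 0 := by
        rw [hφ₁, ← QD.cast21, ← hφ₂, hmod.2]; decide
      obtain ⟨d', hd⟩ := by
        have := (QD.pow_dvd_iff 1 _).mpr hd2; rwa [pow_one] at this
      have hd'odd : φ₁ d' ≠ 0 := by
        intro h
        obtain ⟨k, hk⟩ := by have := (QD.pow_dvd_iff 1 _).mpr h; rwa [pow_one] at this
        have h4 : (2:ℤ_[2])^2 ∣ (2 - 2*a*b) := ⟨k, by rw [hd, hk]; ring⟩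
        rw [QD.pow_dvd_iff, ← hφ₂, hmod.2] at h4
        exact (by decide : (2 : ZMod (2^2)) ≠ 0) h4
      have hNodd : φ₁ (4*t₀^2 + d'^2) ≠ 0 := by
        simp only [map_add, map_mul, map_pow, map_ofNat]
        exact (by decide : ∀ τ δ : ZMod (2^1), δ ≠ 0 → 4*τ^2 + δ^2 ≠ 0) _ _ hd'odd
      obtain ⟨m, hm⟩ := QD.inv_of_odd _ hNodd
      refine ⟨(d' - 2*t₀)*m, (d' + 2*t₀)*m, ?_, ?_⟩
      · linear_combination ((d' - 2*t₀)*m) * hc - ((d' + 2*t₀)*m) * hd - 2 * hm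
      · linear_combination ((d' + 2*t₀)*m) * hc + ((d' - 2*t₀)*m) * hd + 2 * hm
    · have hb : φ₁ b = 0 := by
        rcases (by decide : ∀ x : ZMod (2^1), x = 0 ∨ x = 1) (φ₁ b) with h | h
        · exact h
        · exfalso; apply hab
          rcases (by decide : ∀ x : ZMod (2^1), x = 0 ∨ x = 1) (φ₁ a) with h' | h'
          · exact absurd h' ha
          · rw [h', h]
      have hcast_a : (ZMod.cast (φ₂ a) : ZMod (2^1)) ≠ 0 := by
        rw [hφ₂, QD.cast21, ← hφ₁]; exact ha
      have hcast_b : (ZMod.cast (φ₂ b) : ZMod (2^1)) = 0 := by rw [hφ₂, QD.cast21, ← hφ₁, hb]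
      have hmod : φ₂ (3 - a^2 + b^2) = 2 ∧ φ₂ (2 - 2*a*b) = 2 := by
        simp only [map_add, map_sub, map_mul, map_pow, map_ofNat]
        exact (by decide : ∀ α β : ZMod (2^2), (ZMod.cast α : ZMod (2^1)) ≠ 0 →
          (ZMod.cast β : ZMod (2^1)) = 0 → (3 - α^2 + β^2 = 2 ∧ 2 - 2*α*β = 2)) _ _ hcast_a hcast_b
      have hcd1 : φ₁ (3 - a^2 + b^2) = 0 := by rw [hφ₁, ← QD.cast21, ← hφ₂, hmod.1]; decide
      have hdd1 : φ₁ (2 - 2*a*b) = 0 := by rw [hφ₁, ← QD.cast21, ← hφ₂, hmod.2]; decide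
      obtain ⟨c', hc⟩ := by have := (QD.pow_dvd_iff 1 _).mpr hcd1; rwa [pow_one] at this
      obtain ⟨d', hd⟩ := by have := (QD.pow_dvd_iff 1 _).mpr hdd1; rwa [pow_one] at this
      have hc'odd : φ₁ c' ≠ 0 := by
        intro h
        obtain ⟨k, hk⟩ := by have := (QD.pow_dvd_iff 1 _).mpr h; rwa [pow_one] at this
        have h4 : (2:ℤ_[2])^2 ∣ (3 - a^2 + b^2) := ⟨k, by rw [hc, hk]; ring⟩
        rw [QD.pow_dvd_iff, ← hφ₂, hmod.1] at h4
        exact (by decide : (2 : ZMod (2^2)) ≠ 0) h4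
      have hd'odd : φ₁ d' ≠ 0 := by
        intro h
        obtain ⟨k, hk⟩ := by have := (QD.pow_dvd_iff 1 _).mpr h; rwa [pow_one] at this
        have h4 : (2:ℤ_[2])^2 ∣ (2 - 2*a*b) := ⟨k, by rw [hd, hk]; ring⟩
        rw [QD.pow_dvd_iff, ← hφ₂, hmod.2] at h4
        exact (by decide : (2 : ZMod (2^2)) ≠ 0) h4
      have hediv : φ₁ (d' - c') = 0 := by
        rw [map_sub]
        rcases (by decide : ∀ x : ZMod (2^1), x = 0 ∨ x = 1) (φ₁ c') with h | h
        · exact absurd h hc'odd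
        rcases (by decide : ∀ x : ZMod (2^1), x = 0 ∨ x = 1) (φ₁ d') with h' | h'
        · exact absurd h' hd'odd
        rw [h, h']; decide
      obtain ⟨e, he⟩ := by have := (QD.pow_dvd_iff 1 _).mpr hediv; rwa [pow_one] at this
      have hm'odd : φ₁ (c'^2 + 2*c'*e + 2*e^2) ≠ 0 := by
        simp only [map_add, map_mul, map_pow, map_ofNat]
        exact (by decide : ∀ γ ε : ZMod (2^1), γ ≠ 0 → γ^2 + 2*γ*ε + 2*ε^2 ≠ 0) _ _ hc'odd
      obtain ⟨m, hm⟩ := QD.inv_of_odd _ hm'odd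
      refine ⟨e*m, (c'+e)*m, ?_, ?_⟩
      · linear_combination (e*m) * hc - ((c'+e)*m) * hd - (2*(c'+e)*m) * he - 2 * hm
      · linear_combination ((c'+e)*m) * hc + (e*m) * hd + (2*e*m) * he + 2 * hm

private lemma QD.neg_one_not_sq (r : ℚ_[2]) : r^2 ≠ -1 := by
  intro h
  have hn : ‖r‖ ≤ 1 := by
    nlinarith [norm_pow r 2, norm_nonneg r, (by rw [h]; simp : ‖r^2‖ = 1)]
  set r₀ : ℤ_[2] := ⟨r, hn⟩ with hr₀
  have h2 : (r₀^2 : ℤ_[2]) = -1 := Subtype.ext (by push_cast [hr₀]; exact h)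
  have := congrArg (PadicInt.toZModPow 2) h2
  rw [map_pow, map_neg, map_one] at this
  exact (by decide : ∀ α : ZMod (2^2), α^2 ≠ -1) _ this

section
variable (K : Type*) [Field K] [Algebra ℚ_[2] K] (i : K)

private lemma QD.lin_indep (hi : i^2 = -1) (A B : ℚ_[2])
    (h : algebraMap ℚ_[2] K A + algebraMap ℚ_[2] K B * i = 0) : A = 0 ∧ B = 0 := by
  set f := algebraMap ℚ_[2] K with hf
  have hinj : Function.Injective f := f.injective
  by_cases hB : B = 0
  · subst hB
    refine ⟨?_, rfl⟩
    apply hinj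
    rw [map_zero]
    simpa using h
  · exfalso
    apply QD.neg_one_not_sq (A/B)
    apply hinj
    have hfB : f B ≠ 0 := fun h0 => hB (hinj (by rw [h0, map_zero]))
    rw [map_pow, map_div₀, map_neg, map_one, div_pow]
    have hA : f A = - (f B * i) := by linear_combination h
    rw [hA]
    field_simp
    linear_combination hi

private lemma QD.exists_rep (hi : i^2 = -1) (hgen : Algebra.adjoin ℚ_[2] {i} = ⊤) (x : K) :
    ∃ A B : ℚ_[2], x = algebraMap ℚ_[2] K A + algebraMap ℚ_[2] K B * i := by
  have hx : x ∈ Algebra.adjoin ℚ_[2] {i} := by rw [hgen]; trivial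
  induction hx using Algebra.adjoin_induction with
  | mem y hy =>
    rw [Set.mem_singleton_iff] at hy
    exact ⟨0, 1, by simp [hy]⟩
  | algebraMap r => exact ⟨r, 0, by simp⟩
  | add y z hy hz ihy ihz =>
    obtain ⟨A, B, rfl⟩ := ihy
    obtain ⟨C, D, rfl⟩ := ihz
    exact ⟨A + C, B + D, by push_cast [map_add]; ring⟩
  | mul y z hy hz ihy ihz =>
    obtain ⟨A, B, rfl⟩ := ihy
    obtain ⟨C, D, rfl⟩ := ihz
    refine ⟨A*C - B*D, A*D + B*C, ?_⟩
    rw [map_sub, map_add, map_mul, map_mul, map_mul, map_mul]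
    linear_combination (algebraMap ℚ_[2] K B * algebraMap ℚ_[2] K D) * hi

variable [Algebra ℤ_[2] K] [IsScalarTower ℤ_[2] ℚ_[2] K]

private lemma QD.half_lemma (A B : ℚ_[2]) (hA : ‖2*A‖ ≤ 1) (hw : ‖A^2 + B^2‖ ≤ 1) :
    ‖A‖ ≤ 1 ∧ ‖B‖ ≤ 1 := by
  have h4 : ‖(4 : ℚ_[2])‖ ≤ 1 := by
    have : ((4:ℤ) : ℚ_[2]) = 4 := by norm_num
    rw [← this]; exact Padic.norm_int_le_one 4
  have hB : ‖2*B‖ ≤ 1 := by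
    have hid : (2*B)^2 = 4*(A^2+B^2) + (-((2*A)^2)) := by ring
    have hb2 : ‖(2*B)^2‖ ≤ 1 := by
      rw [hid]
      refine le_trans (Padic.nonarchimedean _ _) (max_le ?_ ?_)
      · rw [norm_mul]
        exact mul_le_one₀ h4 (norm_nonneg _) hw
      · rw [norm_neg, norm_pow]
        nlinarith [norm_nonneg (2*A)]
    rw [norm_pow] at hb2
    nlinarith [norm_nonneg (2*B)]
  set A' : ℤ_[2] := ⟨2*A, hA⟩ with hA'
  set B' : ℤ_[2] := ⟨2*B, hB⟩ with hB'
  set w : ℤ_[2] := ⟨A^2+B^2, hw⟩ with hww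
  have h4' : ((4:ℤ_[2]):ℚ_[2]) = 4 := by
    have := PadicInt.coe_natCast (p := 2) 4
    norm_num at this
    exact this
  have hsum : A'^2 + B'^2 = 4*w := by
    apply Subtype.ext
    push_cast [hA', hB', hww]
    show (2*A)^2 + (2*B)^2 = ((4:ℤ_[2]):ℚ_[2]) * (A^2+B^2)
    rw [h4']
    ring
  have hmod := congrArg (PadicInt.toZModPow 2) hsum
  rw [map_add, map_pow, map_pow, map_mul, map_ofNat] at hmod
  have hkey := (by decide : ∀ α β γ : ZMod (2^2), α^2 + β^2 = 4*γ →
    (ZMod.cast α : ZMod (2^1)) = 0 ∧ (ZMod.cast β : ZMod (2^1)) = 0) _ _ _ hmod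
  have hdvdA : (2:ℤ_[2]) ∣ A' := by
    have := hkey.1; rw [QD.cast21] at this
    have h2 := (QD.pow_dvd_iff 1 A').mpr this; rwa [pow_one] at h2
  have hdvdB : (2:ℤ_[2]) ∣ B' := by
    have := hkey.2; rw [QD.cast21] at this
    have h2 := (QD.pow_dvd_iff 1 B').mpr this; rwa [pow_one] at h2
  obtain ⟨a₀, ha₀⟩ := hdvdA
  obtain ⟨b₀, hb₀⟩ := hdvdB
  have hAa : A = ↑a₀ := by
    have h1 := congrArg (fun z : ℤ_[2] => (z : ℚ_[2])) ha₀
    push_cast at h1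
    have h2 : (2*A : ℚ_[2]) = 2 * ↑a₀ := h1
    exact mul_left_cancel₀ two_ne_zero h2
  have hBb : B = ↑b₀ := by
    have h1 := congrArg (fun z : ℤ_[2] => (z : ℚ_[2])) hb₀
    push_cast at h1
    have h2 : (2*B : ℚ_[2]) = 2 * ↑b₀ := h1
    exact mul_left_cancel₀ two_ne_zero h2
  rw [hAa, hBb]
  exact ⟨PadicInt.norm_le_one a₀, PadicInt.norm_le_one b₀⟩

private lemma QD.coords_int (hi : i^2 = -1) (x : K) (hx : IsIntegral ℤ_[2] x) (A B : ℚ_[2])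
    (hrep : x = algebraMap ℚ_[2] K A + algebraMap ℚ_[2] K B * i) :
    ‖A‖ ≤ 1 ∧ ‖B‖ ≤ 1 := by
  set f := algebraMap ℚ_[2] K with hf
  by_cases hrange : x ∈ (algebraMap ℚ_[2] K).range
  · obtain ⟨r, hr⟩ := hrange
    have hrint : IsIntegral ℤ_[2] r := IsIntegral.tower_bot f.injective (by rwa [hr])
    obtain ⟨y, hy⟩ := IsIntegrallyClosed.isIntegral_iff.mp hrint
    have hrn : ‖r‖ ≤ 1 := by rw [← hy]; exact PadicInt.norm_le_one y
    have h0 : f (A - r) + f B * i = 0 := by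
      rw [map_sub]
      have hfr : f r = x := hr
      rw [hrep] at hfr
      linear_combination -hfr
    obtain ⟨hA0, hB0⟩ := QD.lin_indep K i hi (A - r) B h0
    constructor
    · rw [sub_eq_zero.mp hA0]; exact hrn
    · rw [hB0]; simp
  · have hint : IsIntegral ℚ_[2] x := hx.tower_top
    set q : ℚ_[2][X] := X^2 + C (-(2*A)) * X + C (A^2+B^2) with hq
    have hqmonic : q.Monic := by rw [hq]; monicity!
    have hqdeg : q.natDegree = 2 := by rw [hq]; compute_degree!
    have haev : Polynomial.aeval x q = 0 := by
      rw [hq]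
      simp only [map_add, map_mul, map_pow, Polynomial.aeval_X, Polynomial.aeval_C]
      rw [hrep]
      push_cast [map_neg, map_mul, map_pow, map_add, map_ofNat]
      linear_combination (f B)^2 * hi
    have hdvd : minpoly ℚ_[2] x ∣ q := minpoly.dvd _ _ haev
    have hup : (minpoly ℚ_[2] x).natDegree = 2 := by
      refine le_antisymm ?_ ?_
      · have := Polynomial.natDegree_le_of_dvd hdvd hqmonic.ne_zero
        omega
      · exact (minpoly.two_le_natDegree_iff hint).mpr hrange
    have hqeq : q = minpoly ℚ_[2] x := by
      obtain ⟨v, hv⟩ := hdvd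
      have hmp : (minpoly ℚ_[2] x).Monic := minpoly.monic hint
      have hvne : v ≠ 0 := by
        intro h0; rw [h0, mul_zero] at hv; exact hqmonic.ne_zero hv
      have hdeg : v.natDegree = 0 := by
        have := Polynomial.natDegree_mul hmp.ne_zero hvne
        rw [← hv, hqdeg, hup] at this
        omega
      have hvC : v = C (v.coeff 0) := Polynomial.eq_C_of_natDegree_eq_zero hdeg
      have hlead : v.coeff 0 = 1 := by
        have := congrArg Polynomial.leadingCoeff hv
        rw [Polynomial.leadingCoeff_mul, hmp.leadingCoeff, hqmonic.leadingCoeff, one_mul,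
          hvC, Polynomial.leadingCoeff_C] at this
        exact this.symm
      rw [hv, hvC, hlead, map_one, mul_one]
    have hmap : minpoly ℚ_[2] x = (minpoly ℤ_[2] x).map (algebraMap ℤ_[2] ℚ_[2]) :=
      minpoly.isIntegrallyClosed_eq_field_fractions' ℚ_[2] hx
    set P := minpoly ℤ_[2] x with hP
    have hc1 : -(2*A) = ↑(P.coeff 1) := by
      have := congrArg (fun p => Polynomial.coeff p 1) (hqeq.trans hmap)
      simp only [hq, Polynomial.coeff_add, Polynomial.coeff_C_mul, Polynomial.coeff_X_pow,
        Polynomial.coeff_X_one, Polynomial.coeff_C, Polynomial.coeff_map] at this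
      norm_num at this
      exact this
    have hc0 : A^2 + B^2 = ↑(P.coeff 0) := by
      have := congrArg (fun p => Polynomial.coeff p 0) (hqeq.trans hmap)
      simp only [hq, Polynomial.coeff_add, Polynomial.coeff_C_mul, Polynomial.coeff_X_pow,
        Polynomial.coeff_X_zero, Polynomial.coeff_C, Polynomial.coeff_map] at this
      norm_num at this
      exact this
    apply QD.half_lemma
    · rw [← norm_neg, hc1]; exact PadicInt.norm_le_one _
    · rw [hc0]; exact PadicInt.norm_le_one _

end

/-- In `K = ℚ₂(√−1)` with uniformizer `π = 1 + √−1`, the quadratic defect of the unit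
`u = 3 + 2√−1` equals `(π)³`, the defect being computed in the ring of integers
(the integral closure of `ℤ₂` in `K`). -/
theorem stmt_18 (K : Type*) [Field K] [Algebra ℚ_[2] K]
    [Algebra ℤ_[2] K] [IsScalarTower ℤ_[2] ℚ_[2] K]
    (i : K) (hi : i ^ 2 = -1) (hgen : Algebra.adjoin ℚ_[2] {i} = ⊤)
    (πO uO : integralClosure ℤ_[2] K)
    (hπ : (πO : K) = 1 + i) (hu : (uO : K) = 3 + 2 * i) :
    (⨅ x : integralClosure ℤ_[2] K, Ideal.span {uO - x ^ 2}) = Ideal.span {πO ^ 3} := by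
  have hiInt : IsIntegral ℤ_[2] i := by
    refine ⟨X^2 + 1, by monicity!, ?_⟩
    simp only [eval₂_add, eval₂_pow, eval₂_X, eval₂_one, hi]
    ring
  set iO : integralClosure ℤ_[2] K := ⟨i, hiInt⟩ with hiOdef
  have hiOcoe : (iO : K) = i := rfl
  apply le_antisymm
  · refine le_trans (iInf_le _ 1) ?_
    apply Ideal.span_singleton_le_span_singleton.mpr
    refine ⟨-iO, ?_⟩
    apply Subtype.ext
    push_cast [hu, hπ, hiOcoe]
    linear_combination (i^2 + 3*i + 2) * hi
  · apply le_iInf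
    intro x
    apply Ideal.span_singleton_le_span_singleton.mpr
    obtain ⟨A, B, hrep⟩ := QD.exists_rep K i hi hgen (x : K)
    obtain ⟨hA, hB⟩ := QD.coords_int K i hi (x : K) x.2 A B hrep
    set a : ℤ_[2] := ⟨A, hA⟩ with hadef
    set b : ℤ_[2] := ⟨B, hB⟩ with hbdef
    obtain ⟨s, t, h1, h2⟩ := QD.key_arith a b
    set ψ := algebraMap ℤ_[2] K with hψ
    have hψcoe : ∀ z : ℤ_[2], ψ z = algebraMap ℚ_[2] K (z : ℚ_[2]) := by
      intro z
      rw [hψ, IsScalarTower.algebraMap_apply ℤ_[2] ℚ_[2] K]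
      rfl
    have hψa : ψ a = algebraMap ℚ_[2] K A := by rw [hψcoe]
    have hψb : ψ b = algebraMap ℚ_[2] K B := by rw [hψcoe]
    have H1 := congrArg ψ h1
    have H2 := congrArg ψ h2
    simp only [map_sub, map_add, map_mul, map_pow, map_ofNat, map_neg] at H1 H2
    rw [hψa, hψb] at H1 H2
    refine ⟨algebraMap ℤ_[2] (integralClosure ℤ_[2] K) s
      + algebraMap ℤ_[2] (integralClosure ℤ_[2] K) t * iO, ?_⟩
    apply Subtype.ext
    have hcs : ((algebraMap ℤ_[2] (integralClosure ℤ_[2] K) s : integralClosure ℤ_[2] K) : K)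
        = ψ s := rfl
    have hct : ((algebraMap ℤ_[2] (integralClosure ℤ_[2] K) t : integralClosure ℤ_[2] K) : K)
        = ψ t := rfl
    push_cast [hπ, hu, hiOcoe, hcs, hct, hrep]
    set α := algebraMap ℚ_[2] K A
    set β := algebraMap ℚ_[2] K B
    set S := ψ s
    set T := ψ t
    linear_combination (-1 : K) * H1 - i * H2
      + ((3:K) + i - (2 - 2*α*β)*T + β^2*(S + T*i)) * hi
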